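/- Let M₀, K₀, T₀ be real n₀×n₀ matrices and M₁, K₁, T₁ real n₁×n₁ matrices with T₀ᵀ * M₀ * T₀ = 1, T₁ᵀ * M₁ * T₁ = 1, T₀ᵀ * K₀ * T₀ = Matrix.diagonal d₀, and T₁ᵀ * K₁ * T₁ = Matrix.diagonal d₁ for vectors d₀ : Fin n₀ → ℝ and d₁ : Fin n₁ → ℝ. Assume d₁ i + d₀ j ≠ 0 for all i, j. Then the two-dimensional tensor-product operator M₁ ⊗ₖ K₀ + K₁ ⊗ₖ M₀ is invertible, and (M₁ ⊗ₖ K₀ + K₁ ⊗ₖ M₀) * ((T₁ ⊗ₖ T₀) * D⁻¹ * (T₁ᵀ ⊗ₖ T₀ᵀ)) = 1, where D = Matrix.diagonal (fun (i, j) => d₁ i + d₀ j) = (Matrix.diagonal d₁) ⊗ₖ 1 + 1 ⊗ₖ (Matrix.diagonal d₀). This is the fast diagonalization formula for the inverse in two dimensions. -/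

import Mathlib

open Matrix Kronecker

/-- Fast diagonalization formula for the inverse in two dimensions: if `T₀, T₁`
simultaneously diagonalize the mass and stiffness matrices (`Tᵢᵀ Mᵢ Tᵢ = 1`,
`Tᵢᵀ Kᵢ Tᵢ = diag dᵢ`) and all sums of eigenvalues `d₁ i + d₀ j` are nonzero,
then `M₁ ⊗ₖ K₀ + K₁ ⊗ₖ M₀` is invertible with inverse
`(T₁ ⊗ₖ T₀) * D⁻¹ * (T₁ᵀ ⊗ₖ T₀ᵀ)`, where `D = diag (fun (i, j) => d₁ i + d₀ j)`. -/
theorem fast_diagonalization_inverse_2D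
    {n₀ n₁ : ℕ}
    (M₀ K₀ T₀ : Matrix (Fin n₀) (Fin n₀) ℝ)
    (M₁ K₁ T₁ : Matrix (Fin n₁) (Fin n₁) ℝ)
    (d₀ : Fin n₀ → ℝ) (d₁ : Fin n₁ → ℝ)
    (hM₀ : T₀ᵀ * M₀ * T₀ = 1) (hM₁ : T₁ᵀ * M₁ * T₁ = 1)
    (hK₀ : T₀ᵀ * K₀ * T₀ = Matrix.diagonal d₀)
    (hK₁ : T₁ᵀ * K₁ * T₁ = Matrix.diagonal d₁)
    (hd : ∀ (i : Fin n₁) (j : Fin n₀), d₁ i + d₀ j ≠ 0) :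
    IsUnit (M₁ ⊗ₖ K₀ + K₁ ⊗ₖ M₀) ∧
    (M₁ ⊗ₖ K₀ + K₁ ⊗ₖ M₀) *
      ((T₁ ⊗ₖ T₀) *
        (Matrix.diagonal fun p : Fin n₁ × Fin n₀ => d₁ p.1 + d₀ p.2)⁻¹ *
        (T₁ᵀ ⊗ₖ T₀ᵀ)) = 1 := by
  set A := M₁ ⊗ₖ K₀ + K₁ ⊗ₖ M₀ with hA
  set D : Matrix (Fin n₁ × Fin n₀) (Fin n₁ × Fin n₀) ℝ :=
    Matrix.diagonal fun p : Fin n₁ × Fin n₀ => d₁ p.1 + d₀ p.2 with hD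
  -- invertibility facts
  have hT₀ : IsUnit T₀ := (Matrix.isUnit_iff_isUnit_det _).mpr (Matrix.isUnit_det_of_left_inverse hM₀)
  have hT₁ : IsUnit T₁ := (Matrix.isUnit_iff_isUnit_det _).mpr (Matrix.isUnit_det_of_left_inverse hM₁)
  have hT₀t : IsUnit T₀ᵀ := (Matrix.isUnit_iff_isUnit_det _).mpr
    (by rw [Matrix.det_transpose]; exact (Matrix.isUnit_iff_isUnit_det _).mp hT₀)
  have hT₁t : IsUnit T₁ᵀ := (Matrix.isUnit_iff_isUnit_det _).mpr
    (by rw [Matrix.det_transpose]; exact (Matrix.isUnit_iff_isUnit_det _).mp hT₁)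
  have hDu : IsUnit D := by
    rw [hD, Matrix.isUnit_diagonal]
    exact IsUnit.of_mul_eq_one (fun p => (d₁ p.1 + d₀ p.2)⁻¹)
      (funext fun p => mul_inv_cancel₀ (hd p.1 p.2))
  -- key diagonalization identity
  have key : (T₁ᵀ ⊗ₖ T₀ᵀ) * A * (T₁ ⊗ₖ T₀) = D := by
    rw [hA, Matrix.mul_add, Matrix.add_mul, ← Matrix.mul_kronecker_mul,
      ← Matrix.mul_kronecker_mul, ← Matrix.mul_kronecker_mul, ← Matrix.mul_kronecker_mul,
      hM₀, hM₁, hK₀, hK₁, hD]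
    ext ⟨i, j⟩ ⟨k, l⟩
    simp [Matrix.kroneckerMap_apply, Matrix.one_apply, Matrix.diagonal_apply, Prod.ext_iff, add_comm]
    aesop
  have hP : (T₁ ⊗ₖ T₀) * (T₁⁻¹ ⊗ₖ T₀⁻¹) = 1 := by
    rw [← Matrix.mul_kronecker_mul, Matrix.mul_nonsing_inv _ ((Matrix.isUnit_iff_isUnit_det _).mp hT₁),
      Matrix.mul_nonsing_inv _ ((Matrix.isUnit_iff_isUnit_det _).mp hT₀), Matrix.one_kronecker_one]
  have hQ : (T₁ᵀ⁻¹ ⊗ₖ T₀ᵀ⁻¹) * (T₁ᵀ ⊗ₖ T₀ᵀ) = 1 := by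
    rw [← Matrix.mul_kronecker_mul,
      Matrix.nonsing_inv_mul _ ((Matrix.isUnit_iff_isUnit_det _).mp hT₁t),
      Matrix.nonsing_inv_mul _ ((Matrix.isUnit_iff_isUnit_det _).mp hT₀t), Matrix.one_kronecker_one]
  -- express A
  have hAeq : A = (T₁ᵀ⁻¹ ⊗ₖ T₀ᵀ⁻¹) * D * (T₁⁻¹ ⊗ₖ T₀⁻¹) := by
    rw [← key]
    symm
    calc (T₁ᵀ⁻¹ ⊗ₖ T₀ᵀ⁻¹) * ((T₁ᵀ ⊗ₖ T₀ᵀ) * A * (T₁ ⊗ₖ T₀)) * (T₁⁻¹ ⊗ₖ T₀⁻¹)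
        = ((T₁ᵀ⁻¹ ⊗ₖ T₀ᵀ⁻¹) * (T₁ᵀ ⊗ₖ T₀ᵀ)) * A * ((T₁ ⊗ₖ T₀) * (T₁⁻¹ ⊗ₖ T₀⁻¹)) := by
          noncomm_ring
      _ = A := by rw [hP, hQ, Matrix.one_mul, Matrix.mul_one]
  have hmain : A * ((T₁ ⊗ₖ T₀) * D⁻¹ * (T₁ᵀ ⊗ₖ T₀ᵀ)) = 1 := by
    rw [hAeq]
    have h1 : (T₁⁻¹ ⊗ₖ T₀⁻¹) * (T₁ ⊗ₖ T₀) = 1 := by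
      rw [← Matrix.mul_kronecker_mul,
        Matrix.nonsing_inv_mul _ ((Matrix.isUnit_iff_isUnit_det _).mp hT₁),
        Matrix.nonsing_inv_mul _ ((Matrix.isUnit_iff_isUnit_det _).mp hT₀),
        Matrix.one_kronecker_one]
    have h2 : (T₁ᵀ ⊗ₖ T₀ᵀ) * (T₁ᵀ⁻¹ ⊗ₖ T₀ᵀ⁻¹) = 1 := mul_eq_one_comm.mp hQ
    calc (T₁ᵀ⁻¹ ⊗ₖ T₀ᵀ⁻¹) * D * (T₁⁻¹ ⊗ₖ T₀⁻¹) * ((T₁ ⊗ₖ T₀) * D⁻¹ * (T₁ᵀ ⊗ₖ T₀ᵀ))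
        = (T₁ᵀ⁻¹ ⊗ₖ T₀ᵀ⁻¹) * (D * ((T₁⁻¹ ⊗ₖ T₀⁻¹) * (T₁ ⊗ₖ T₀)) * D⁻¹) * (T₁ᵀ ⊗ₖ T₀ᵀ) := by
          noncomm_ring
      _ = 1 := by
          rw [h1, Matrix.mul_one, Matrix.mul_nonsing_inv _ ((Matrix.isUnit_iff_isUnit_det _).mp hDu),
            Matrix.mul_one]
          exact hQ
  exact ⟨(Matrix.isUnit_iff_isUnit_det _).mpr (Matrix.isUnit_det_of_right_inverse hmain), hmain⟩
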